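/- Let g̃ ≥ 0 be a random variable with finite mean, let 0 = g_0 < g_1 < ⋯ < g_L be quantization thresholds, and let g be the quantization of g̃ that maps g̃ ∈ [g_{ℓ−1}, g_ℓ) to g_{ℓ−1} and g̃ ≥ g_L to g_L. Then for any P > 0, E[log(1 + P·g̃)] − E[log(1 + P·g)] < max_{1≤ℓ≤L} log(1 + P(g_ℓ − g_{ℓ−1})) + (log e)·E[g̃]/g_L. -/

import Mathlib

open MeasureTheory ProbabilityTheory

private lemma bin_bound {P a x : ℝ} (hP : 0 < P) (ha : 0 ≤ a) (hax : a ≤ x) :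
    Real.logb 2 (1 + P * x) - Real.logb 2 (1 + P * a)
      ≤ Real.logb 2 (1 + P * (x - a)) := by
  have h1 : (0:ℝ) < 1 + P * a := by nlinarith
  have h2 : (0:ℝ) < 1 + P * x := by nlinarith
  have h3 : (0:ℝ) < 1 + P * (x - a) := by nlinarith
  rw [sub_le_iff_le_add, ← Real.logb_mul (by positivity) (by positivity)]
  apply (Real.logb_le_logb one_lt_two h2 (by positivity)).2
  nlinarith [mul_nonneg (mul_nonneg (mul_nonneg hP.le hP.le) (sub_nonneg.2 hax)) ha]

/-- Capacity loss from quantizing a nonnegative channel gain `g̃` to the lower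
endpoints of the brackets `[g_{ℓ−1}, g_ℓ)` (and to `g_L` beyond `g_L`):
`E[log(1+P g̃)] − E[log(1+P g)] < max_ℓ log(1+P(g_ℓ−g_{ℓ−1})) + (log e)·E[g̃]/g_L`. -/
theorem stmt10 {Ω : Type*} [MeasureSpace Ω] [IsProbabilityMeasure (ℙ : Measure Ω)]
    {L : ℕ} (hL : 0 < L) (g : Fin (L + 1) → ℝ) (hg0 : g 0 = 0) (hgmono : StrictMono g)
    (G : Ω → ℝ) (hGmeas : Measurable G) (hG0 : ∀ ω, 0 ≤ G ω) (hGint : Integrable G)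
    (q : ℝ → ℝ)
    (hq : ∀ x, ∀ ℓ : Fin L, x ∈ Set.Ico (g ℓ.castSucc) (g ℓ.succ) → q x = g ℓ.castSucc)
    (hqtop : ∀ x, g (Fin.last L) ≤ x → q x = g (Fin.last L))
    (P : ℝ) (hP : 0 < P)
    (hint1 : Integrable fun ω => Real.logb 2 (1 + P * G ω))
    (hint2 : Integrable fun ω => Real.logb 2 (1 + P * q (G ω))) :
    (∫ ω, Real.logb 2 (1 + P * G ω)) - ∫ ω, Real.logb 2 (1 + P * q (G ω))
      < (⨆ ℓ : Fin L, Real.logb 2 (1 + P * (g ℓ.succ - g ℓ.castSucc)))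
        + Real.logb 2 (Real.exp 1) * (∫ ω, G ω) / g (Fin.last L) := by
  have hlog2 : (0:ℝ) < Real.log 2 := Real.log_pos one_lt_two
  set c : ℝ := Real.logb 2 (Real.exp 1) with hc
  have hcval : c = 1 / Real.log 2 := by
    simp [hc, Real.logb, Real.log_exp]
  have hcpos : 0 < c := by rw [hcval]; positivity
  set gL : ℝ := g (Fin.last L) with hgL
  have hlastpos : (0 : Fin (L+1)) < Fin.last L := by
    rw [Fin.lt_def]; simpa using hL
  have hgLpos : 0 < gL := by
    rw [hgL, ← hg0]; exact hgmono hlastpos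
  set M : ℝ := ⨆ ℓ : Fin L, Real.logb 2 (1 + P * (g ℓ.succ - g ℓ.castSucc)) with hM
  haveI : Nonempty (Fin L) := ⟨⟨0, hL⟩⟩
  have hbdd : BddAbove (Set.range fun ℓ : Fin L =>
      Real.logb 2 (1 + P * (g ℓ.succ - g ℓ.castSucc))) :=
    (Set.finite_range _).bddAbove
  have hMle : ∀ ℓ : Fin L, Real.logb 2 (1 + P * (g ℓ.succ - g ℓ.castSucc)) ≤ M :=
    fun ℓ => le_ciSup hbdd ℓ
  have hMpos : 0 < M := by
    refine lt_of_lt_of_le ?_ (hMle ⟨0, hL⟩)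
    apply Real.logb_pos one_lt_two
    have : g (⟨0, hL⟩ : Fin L).castSucc < g (⟨0, hL⟩ : Fin L).succ :=
      hgmono Fin.castSucc_lt_succ
    nlinarith
  -- pointwise strict bound
  have key : ∀ ω, Real.logb 2 (1 + P * G ω) - Real.logb 2 (1 + P * q (G ω))
      < M + c * G ω / gL := by
    intro ω
    have hGω := hG0 ω
    by_cases htop : gL ≤ G ω
    · rw [hqtop _ htop]
      have h1 : (0:ℝ) < 1 + P * gL := by nlinarith
      have h2 : (0:ℝ) < 1 + P * G ω := by nlinarith
      have hratio : (1 + P * G ω) / (1 + P * gL) ≤ G ω / gL := by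
        rw [div_le_div_iff₀ h1 hgLpos]; nlinarith
      have hrpos : (0:ℝ) < (1 + P * G ω) / (1 + P * gL) := by positivity
      have step1 : Real.logb 2 (1 + P * G ω) - Real.logb 2 (1 + P * gL)
          ≤ Real.logb 2 (G ω / gL) := by
        rw [← Real.logb_div (ne_of_gt h2) (ne_of_gt h1)]
        exact (Real.logb_le_logb one_lt_two hrpos (lt_of_lt_of_le hrpos hratio)).2 hratio
      have hxpos : 0 < G ω / gL := div_pos (lt_of_lt_of_le hgLpos htop) hgLpos
      have step2 : Real.logb 2 (G ω / gL) ≤ c * (G ω / gL - 1) := by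
        calc Real.logb 2 (G ω / gL) = Real.log (G ω / gL) * c := by
              rw [Real.logb, hcval]; ring
          _ ≤ (G ω / gL - 1) * c :=
              mul_le_mul_of_nonneg_right (Real.log_le_sub_one_of_pos hxpos) hcpos.le
          _ = c * (G ω / gL - 1) := by ring
      have : c * (G ω / gL - 1) < M + c * G ω / gL := by
        have : c * (G ω / gL) = c * G ω / gL := by ring
        nlinarith
      linarith
    · push_neg at htop
      -- find the bin
      have hSne : (Finset.univ.filter (fun k : Fin L => g k.castSucc ≤ G ω)).Nonempty := by
        refine ⟨⟨0, hL⟩, ?_⟩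
        simp only [Finset.mem_filter, Finset.mem_univ, true_and]
        have : (⟨0, hL⟩ : Fin L).castSucc = 0 := rfl
        rw [this, hg0]; exact hGω
      set ℓ := (Finset.univ.filter (fun k : Fin L => g k.castSucc ≤ G ω)).max' hSne with hℓ
      have hℓmem := (Finset.univ.filter (fun k : Fin L => g k.castSucc ≤ G ω)).max'_mem hSne
      rw [Finset.mem_filter] at hℓmem
      have ha : g ℓ.castSucc ≤ G ω := hℓmem.2
      have hb : G ω < g ℓ.succ := by
        by_contra hcon
        push_neg at hcon
        by_cases hl : (ℓ : ℕ) + 1 < L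
        · set k : Fin L := ⟨(ℓ : ℕ) + 1, hl⟩ with hk
          have hkc : k.castSucc = ℓ.succ := rfl
          have hkmem : k ∈ Finset.univ.filter (fun k : Fin L => g k.castSucc ≤ G ω) := by
            rw [Finset.mem_filter]; exact ⟨Finset.mem_univ _, by rw [hkc]; exact hcon⟩
          have := Finset.le_max' _ k hkmem
          rw [← hℓ] at this
          have : ((k : ℕ)) ≤ (ℓ : ℕ) := this
          simp [hk] at this
        · have hle : (ℓ : ℕ) + 1 = L := by
            have := ℓ.isLt; omega
          have : ℓ.succ = Fin.last L := by
            apply Fin.ext; simp [hle]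
          rw [this] at hcon
          exact absurd hcon (not_le.2 htop)
      rw [hq _ ℓ ⟨ha, hb⟩]
      have ha0 : 0 ≤ g ℓ.castSucc := by
        rw [← hg0]
        exact hgmono.monotone (Fin.zero_le _)
      have h1 := bin_bound hP ha0 ha
      have h2 : Real.logb 2 (1 + P * (G ω - g ℓ.castSucc))
          < Real.logb 2 (1 + P * (g ℓ.succ - g ℓ.castSucc)) := by
        apply Real.logb_lt_logb one_lt_two (by nlinarith)
        nlinarith
      have h3 := hMle ℓ
      have h4 : 0 ≤ c * G ω / gL := by positivity
      linarith
  -- integrate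
  have hhint : Integrable (fun ω => M + c * G ω / gL) := by
    exact (integrable_const M).add (((hGint.const_mul c).div_const gL))
  have hfint : Integrable (fun ω =>
      Real.logb 2 (1 + P * G ω) - Real.logb 2 (1 + P * q (G ω))) := hint1.sub hint2
  have hDint : Integrable (fun ω => (M + c * G ω / gL) -
      (Real.logb 2 (1 + P * G ω) - Real.logb 2 (1 + P * q (G ω)))) := hhint.sub hfint
  have hDnn : 0 ≤ fun ω => (M + c * G ω / gL) -
      (Real.logb 2 (1 + P * G ω) - Real.logb 2 (1 + P * q (G ω))) :=
    fun ω => sub_nonneg.2 (le_of_lt (key ω))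
  have hDpos : 0 < ∫ ω, ((M + c * G ω / gL) -
      (Real.logb 2 (1 + P * G ω) - Real.logb 2 (1 + P * q (G ω)))) := by
    rcases lt_or_eq_of_le (integral_nonneg hDnn) with h | h
    · exact h
    · exfalso
      have := (integral_eq_zero_iff_of_nonneg hDnn hDint).1 h.symm
      obtain ⟨ω, hω⟩ := this.exists
      have := key ω
      simp only [Pi.zero_apply] at hω
      linarith [sub_eq_zero.1 hω]
  rw [integral_sub hhint hfint, integral_add (integrable_const M)
    ((hGint.const_mul c).div_const gL), integral_const, integral_div, integral_const_mul,
    probReal_univ] at hDpos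
  have hfeq : ∫ ω, (Real.logb 2 (1 + P * G ω) - Real.logb 2 (1 + P * q (G ω)))
      = (∫ ω, Real.logb 2 (1 + P * G ω)) - ∫ ω, Real.logb 2 (1 + P * q (G ω)) :=
    integral_sub hint1 hint2
  rw [hfeq] at hDpos
  simp only [ENNReal.toReal_one, one_smul, smul_eq_mul] at hDpos
  linarith
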